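/- Let (X,B,b) be a coarse proximity space and φ its weak asymptotic resemblance. If A φ B and C φ D, then (A ∪ C) φ (B ∪ D). -/
import Mathlib


open Set

universe u
variable {X : Type u}

/-- The axioms of a coarse proximity structure: a bornology `B` (contains singletons,
closed under subsets and finite unions) and a relation `b` satisfying symmetry,
unboundedness of related sets, relatedness of sets with unbounded intersection,
the union axiom, and the strong axiom. -/
structure IsCoarseProximity (B : Set (Set X)) (b : Set X → Set X → Prop) : Prop where
  singleton_mem : ∀ x : X, {x} ∈ B
  subset_mem : ∀ A C : Set X, A ∈ B → C ⊆ A → C ∈ B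
  union_mem : ∀ A C : Set X, A ∈ B → C ∈ B → A ∪ C ∈ B
  symm : ∀ A C : Set X, b A C → b C A
  unbounded_of_rel : ∀ A C : Set X, b A C → A ∉ B ∧ C ∉ B
  rel_of_inter : ∀ A C : Set X, A ∩ C ∉ B → b A C
  union_iff : ∀ A C D : Set X, b (A ∪ C) D ↔ b A D ∨ b C D
  strong : ∀ A C : Set X, ¬ b A C → ∃ E : Set X, ¬ b A E ∧ ¬ b (univ \ E) C

/-- A coarse proximity space structure on `X`. -/
structure CoarseProximity (X : Type u) where
  B : Set (Set X)
  b : Set X → Set X → Prop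
  isCP : IsCoarseProximity B b

/-- The weak asymptotic resemblance induced by a coarse proximity. -/
def phi (cp : CoarseProximity X) (A C : Set X) : Prop :=
  (∀ C' ⊆ C, C' ∉ cp.B → cp.b A C') ∧ (∀ A' ⊆ A, A' ∉ cp.B → cp.b A' C)

/-- Monotonicity of `b` in the first argument among subsets. -/
lemma b_mono (cp : CoarseProximity X) {T S A : Set X} (hTS : T ⊆ S)
    (h : cp.b T A) : cp.b S A := by
  have : cp.b (T ∪ (S \ T)) A := (cp.isCP.union_iff T (S \ T) A).mpr (Or.inl h)
  rwa [Set.union_diff_cancel' le_rfl hTS] at this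

/-- `A φ B` and `C φ D` imply `(A ∪ C) φ (B ∪ D)`. -/
theorem phi_union (cp : CoarseProximity X) (A B C D : Set X)
    (hAB : phi cp A B) (hCD : phi cp C D) : phi cp (A ∪ C) (B ∪ D) := by
  constructor
  · intro S hS hSub
    by_cases h : S ∩ B ∈ cp.B
    · have hSD : S ∩ D ∉ cp.B := by
        intro hd
        exact hSub (cp.isCP.subset_mem _ _ (cp.isCP.union_mem _ _ h hd)
          (by intro x hx; rcases hS hx with h1 | h1
              · exact Or.inl ⟨hx, h1⟩
              · exact Or.inr ⟨hx, h1⟩))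
      have := hCD.1 (S ∩ D) inter_subset_right hSD
      have := cp.isCP.symm _ _ this
      have := b_mono cp inter_subset_left this
      exact (cp.isCP.union_iff A C S).mpr (Or.inr (cp.isCP.symm _ _ this))
    · have := hAB.1 (S ∩ B) inter_subset_right h
      have := cp.isCP.symm _ _ this
      have := b_mono cp inter_subset_left this
      exact (cp.isCP.union_iff A C S).mpr (Or.inl (cp.isCP.symm _ _ this))
  · intro S hS hSub
    by_cases h : S ∩ A ∈ cp.B
    · have hSC : S ∩ C ∉ cp.B := by
        intro hd
        exact hSub (cp.isCP.subset_mem _ _ (cp.isCP.union_mem _ _ h hd)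
          (by intro x hx; rcases hS hx with h1 | h1
              · exact Or.inl ⟨hx, h1⟩
              · exact Or.inr ⟨hx, h1⟩))
      have := hCD.2 (S ∩ C) inter_subset_right hSC
      have hb := b_mono cp inter_subset_left this
      exact cp.isCP.symm _ _ ((cp.isCP.union_iff B D S).mpr (Or.inr (cp.isCP.symm _ _ hb)))
    · have := hAB.2 (S ∩ A) inter_subset_right h
      have hb := b_mono cp inter_subset_left this
      exact cp.isCP.symm _ _ ((cp.isCP.union_iff B D S).mpr (Or.inl (cp.isCP.symm _ _ hb)))
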